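/- Assume B > 0 and each M_i satisfies condition (H₁): lim_{t→∞} t^{1−p^*/p} M_i(t) = 0. Then lim_{t→0⁺} ψ(t) = −λ q C, and ψ(t) → −∞ as t → ∞. -/
import Mathlib


open Filter Topology

/-- If `B > 0` and each Kirchhoff function `M_i` satisfies (H₁):
`lim_{t→∞} t^{1-p^*/p} M_i(t) = 0`, then `ψ(t) → -λqC` as `t → 0⁺` and
`ψ(t) → -∞` as `t → ∞`. -/
theorem stmt_4 (q p pstar lam m₁ m₂ m A₁ A₂ A B C : ℝ)
    (M₁ M₂ : ℝ → ℝ)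
    (hq : 1 < q) (hqp : q < p) (hppstar : p < pstar)
    (hlam : 0 < lam)
    (hM₁c : ContinuousOn M₁ (Set.Ici 0)) (hM₂c : ContinuousOn M₂ (Set.Ici 0))
    (hm₁ : 0 < m₁) (hm₂ : 0 < m₂)
    (hM₁ : ∀ t : ℝ, 0 ≤ t → m₁ ≤ M₁ t) (hM₂ : ∀ t : ℝ, 0 ≤ t → m₂ ≤ M₂ t)
    (hm : m = min m₁ m₂)
    (hH₁M₁ : Tendsto (fun t : ℝ => t ^ (1 - pstar / p) * M₁ t) atTop (𝓝 0))
    (hH₁M₂ : Tendsto (fun t : ℝ => t ^ (1 - pstar / p) * M₂ t) atTop (𝓝 0))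
    (hA₁ : 0 < A₁) (hA₂ : 0 < A₂) (hA : A = A₁ + A₂)
    (hB : 0 < B) (hC : 0 ≤ C)
    (ψ : ℝ → ℝ)
    (hψ : ∀ t : ℝ, ψ t =
      t ^ (p - q) * (A₁ * M₁ (t ^ p * A₁) + A₂ * M₂ (t ^ p * A₂))
        - t ^ (pstar - q) * B - lam * q * C) :
    Tendsto ψ (𝓝[>] (0 : ℝ)) (𝓝 (-(lam * q * C))) ∧
      Tendsto ψ atTop atBot := by
  have hpq : (0:ℝ) < p - q := by linarith
  have hpsq : (0:ℝ) < pstar - q := by linarith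
  have hp : (0:ℝ) < p := by linarith
  constructor
  · -- limit at 0+
    have hz : ∀ y : ℝ, 0 < y → Tendsto (fun t : ℝ => t ^ y) (𝓝[>] (0:ℝ)) (𝓝 0) := by
      intro y hy
      have h := (Real.continuousAt_rpow_const 0 y (Or.inr hy.le)).tendsto
      rw [Real.zero_rpow hy.ne'] at h
      exact h.mono_left nhdsWithin_le_nhds
    have key : ∀ (A₀ : ℝ), 0 < A₀ → ∀ (M : ℝ → ℝ), ContinuousOn M (Set.Ici 0) →
        Tendsto (fun t : ℝ => M (t ^ p * A₀)) (𝓝[>] (0:ℝ)) (𝓝 (M 0)) := by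
      intro A₀ hA₀ M hM
      have h1 : Tendsto (fun t : ℝ => t ^ p * A₀) (𝓝[>] (0:ℝ)) (𝓝[Set.Ici 0] 0) := by
        rw [tendsto_nhdsWithin_iff]
        constructor
        · simpa using (hz p hp).mul_const A₀
        · filter_upwards [self_mem_nhdsWithin] with t ht
          exact mul_nonneg (Real.rpow_nonneg (le_of_lt ht) p) hA₀.le
      exact (hM 0 (by simp)).tendsto.comp h1
    have hT : Tendsto (fun t : ℝ =>
        t ^ (p - q) * (A₁ * M₁ (t ^ p * A₁) + A₂ * M₂ (t ^ p * A₂))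
          - t ^ (pstar - q) * B - lam * q * C) (𝓝[>] (0:ℝ))
        (𝓝 ((0:ℝ) * (A₁ * M₁ 0 + A₂ * M₂ 0) - 0 * B - lam * q * C)) :=
      (((hz (p - q) hpq).mul (((key A₁ hA₁ M₁ hM₁c).const_mul A₁).add
        ((key A₂ hA₂ M₂ hM₂c).const_mul A₂))).sub ((hz (pstar - q) hpsq).mul_const B)).sub
        tendsto_const_nhds
    have hval : (0:ℝ) * (A₁ * M₁ 0 + A₂ * M₂ 0) - 0 * B - lam * q * C = -(lam * q * C) := by
      ring
    rw [hval] at hT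
    exact hT.congr fun t => (hψ t).symm
  · -- limit at ∞
    have hgt : ∀ (A₀ : ℝ), 0 < A₀ → ∀ (M : ℝ → ℝ),
        Tendsto (fun s : ℝ => s ^ (1 - pstar / p) * M s) atTop (𝓝 0) →
        Tendsto (fun t : ℝ => t ^ (p - pstar) * M (t ^ p * A₀)) atTop (𝓝 0) := by
      intro A₀ hA₀ M hH
      have harg : Tendsto (fun t : ℝ => t ^ p * A₀) atTop atTop :=
        (tendsto_rpow_atTop hp).atTop_mul_const hA₀
      have hcomp : Tendsto (fun t : ℝ =>
          (t ^ p * A₀) ^ (1 - pstar / p) * M (t ^ p * A₀)) atTop (𝓝 0) := hH.comp harg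
      have h2 := hcomp.const_mul (A₀ ^ (pstar / p - 1))
      rw [mul_zero] at h2
      refine h2.congr' ?_
      filter_upwards [eventually_gt_atTop (0:ℝ)] with t ht
      have htp : (0:ℝ) < t ^ p := Real.rpow_pos_of_pos ht p
      have e1 : (t ^ p) ^ (1 - pstar / p) = t ^ (p - pstar) := by
        rw [← Real.rpow_mul ht.le]
        congr 1
        field_simp
      have e2 : A₀ ^ (pstar / p - 1) * A₀ ^ (1 - pstar / p) = 1 := by
        rw [← Real.rpow_add hA₀]
        norm_num
      rw [Real.mul_rpow htp.le hA₀.le, e1]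
      calc A₀ ^ (pstar / p - 1) * (t ^ (p - pstar) * A₀ ^ (1 - pstar / p) * M (t ^ p * A₀))
          = (A₀ ^ (pstar / p - 1) * A₀ ^ (1 - pstar / p)) * (t ^ (p - pstar) * M (t ^ p * A₀)) := by
            ring
        _ = t ^ (p - pstar) * M (t ^ p * A₀) := by rw [e2, one_mul]
    have hg : Tendsto (fun t : ℝ =>
        t ^ (p - pstar) * (A₁ * M₁ (t ^ p * A₁) + A₂ * M₂ (t ^ p * A₂)) - B) atTop (𝓝 (-B)) := by
      have hsum : Tendsto (fun t : ℝ =>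
          A₁ * (t ^ (p - pstar) * M₁ (t ^ p * A₁)) + A₂ * (t ^ (p - pstar) * M₂ (t ^ p * A₂)))
          atTop (𝓝 0) := by
        have := ((hgt A₁ hA₁ M₁ hH₁M₁).const_mul A₁).add ((hgt A₂ hA₂ M₂ hH₁M₂).const_mul A₂)
        simpa using this
      have := hsum.sub_const B
      rw [zero_sub] at this
      exact this.congr fun t => by ring
    have hmain : Tendsto (fun t : ℝ => t ^ (pstar - q) *
        (t ^ (p - pstar) * (A₁ * M₁ (t ^ p * A₁) + A₂ * M₂ (t ^ p * A₂)) - B)) atTop atBot :=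
      (tendsto_rpow_atTop hpsq).atTop_mul_neg (by linarith : -B < 0) hg
    have hfin := tendsto_atBot_add_const_right atTop (-(lam * q * C)) hmain
    refine hfin.congr' ?_
    filter_upwards [eventually_gt_atTop (0:ℝ)] with t ht
    have hsplit : t ^ (p - q) = t ^ (pstar - q) * t ^ (p - pstar) := by
      rw [← Real.rpow_add ht]
      congr 1
      ring
    rw [hψ t, hsplit]
    ring
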